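/- For every nonnegative integer ν, every A ≥ 0, every c > 1, and every integer k ≥ 2, there is a constant C = C(ν, A, k, c) > 0 such that for all real T ≥ 2 and 1 ≤ M ≤ T and all t ∈ ℝ, the ν-th derivative of the restriction of h^♯ to ℝ satisfies |(h^♯)^{(ν)}(t)| ≤ C · M^{−ν} · ((1 + |t−T|/M)^{−A} + (1 + |t+T|/M)^{−A}). -/

import Mathlib

/-- `Φ_{k,c}(z) := exp(−(z/c)^{2k})`. -/
noncomputable def Phi (k : ℕ) (c : ℝ) (z : ℂ) : ℂ :=
  Complex.exp (-((z / (c : ℂ)) ^ (2 * k)))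

/-- The almost-flat window
`h^♯(z) = ((z² + 1/4)/(T² + 1/4)) · (Φ_{k,c}((z−T)/M) + Φ_{k,c}((z+T)/M))`. -/
noncomputable def hSharp (T M c : ℝ) (k : ℕ) (z : ℂ) : ℂ :=
  ((z ^ 2 + 1 / 4) / ((T : ℂ) ^ 2 + 1 / 4)) *
    (Phi k c ((z - (T : ℂ)) / (M : ℂ)) + Phi k c ((z + (T : ℂ)) / (M : ℂ)))

open Polynomial

noncomputable def Efun (k : ℕ) (c : ℝ) (u : ℝ) : ℂ :=
  Complex.exp (-(((u : ℂ) / (c : ℂ)) ^ (2 * k)))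

noncomputable def dOp (k : ℕ) (c : ℝ) (P : Polynomial ℂ) : Polynomial ℂ :=
  P.derivative + P * (Polynomial.C (-(2 * k : ℂ) / (c : ℂ) ^ (2 * k)) * Polynomial.X ^ (2 * k - 1))

lemma E_hasDerivAt {k : ℕ} (hk : 1 ≤ k) {c : ℝ} (hc : 0 < c) (z : ℂ) :
    HasDerivAt (fun z : ℂ => Complex.exp (-((z / (c : ℂ)) ^ (2 * k))))
      ((-(2 * k : ℂ) / (c : ℂ) ^ (2 * k)) * z ^ (2 * k - 1)
        * Complex.exp (-((z / (c : ℂ)) ^ (2 * k)))) z := by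
  have hc0 : (c : ℂ) ≠ 0 := by exact_mod_cast hc.ne'
  have h1 : HasDerivAt (fun z : ℂ => z / (c : ℂ)) (1 / (c : ℂ)) z := by
    simpa using (hasDerivAt_id z).div_const (c : ℂ)
  have h2 : HasDerivAt (fun z : ℂ => (z / (c : ℂ)) ^ (2 * k))
      (((2 * k : ℕ) : ℂ) * (z / (c : ℂ)) ^ (2 * k - 1) * (1 / (c : ℂ))) z :=
    HasDerivAt.comp z (hasDerivAt_pow (2 * k) (z / (c : ℂ))) h1
  have h3 := h2.neg.cexp
  refine h3.congr_deriv ?_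
  symm
  simp only [Pi.neg_apply]
  rw [div_pow z (c:ℂ) (2*k-1)]
  push_cast
  field_simp
  have hcc : (c:ℂ) ^ (2*k) = (c:ℂ) ^ (2*k-1) * (c:ℂ) := by
    conv_lhs => rw [show 2*k = (2*k-1)+1 by omega]
    exact pow_succ _ _
  rw [hcc]
  ring

lemma deriv_PE {k : ℕ} (hk : 1 ≤ k) {c : ℝ} (hc : 0 < c) (P : Polynomial ℂ) :
    deriv (fun u : ℝ => P.eval (u : ℂ) * Efun k c u)
      = fun u : ℝ => (dOp k c P).eval (u : ℂ) * Efun k c u := by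
  funext u
  have hp : HasDerivAt (fun u : ℝ => P.eval (u : ℂ)) (P.derivative.eval (u : ℂ)) u :=
    (P.hasDerivAt ((u : ℝ) : ℂ)).comp_ofReal
  have hE : HasDerivAt (fun u : ℝ => Efun k c u)
      ((-(2 * k : ℂ) / (c : ℂ) ^ (2 * k)) * (u : ℂ) ^ (2 * k - 1) * Efun k c u) u :=
    (E_hasDerivAt hk hc ((u : ℝ) : ℂ)).comp_ofReal
  rw [show (fun u : ℝ => P.eval (u : ℂ) * Efun k c u) = (fun u : ℝ => P.eval (u : ℂ)) * (fun u : ℝ => Efun k c u) from rfl, (hp.mul hE).deriv]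
  simp only [dOp, Polynomial.eval_add, Polynomial.eval_mul, Polynomial.eval_C,
    Polynomial.eval_pow, Polynomial.eval_X]
  ring

lemma iter_rep {k : ℕ} (hk : 1 ≤ k) {c : ℝ} (hc : 0 < c) (j : ℕ) (P : Polynomial ℂ) :
    iteratedDeriv j (fun u : ℝ => P.eval (u : ℂ) * Efun k c u)
      = fun u : ℝ => ((dOp k c)^[j] P).eval (u : ℂ) * Efun k c u := by
  induction j generalizing P with
  | zero => simp
  | succ j IH =>
      rw [iteratedDeriv_succ', deriv_PE hk hc P, IH (dOp k c P),
        Function.iterate_succ_apply]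

lemma poly_eval_bound (Q : Polynomial ℂ) :
    ∃ B : ℝ, 0 < B ∧ ∀ x : ℝ, ‖Q.eval (x : ℂ)‖ ≤ B * (1 + |x|) ^ Q.natDegree := by
  refine ⟨(∑ i ∈ Finset.range (Q.natDegree + 1), ‖Q.coeff i‖) + 1, by positivity, fun x => ?_⟩
  have hx1 : (1 : ℝ) ≤ 1 + |x| := by simp [abs_nonneg]
  rw [Polynomial.eval_eq_sum_range]
  calc ‖∑ i ∈ Finset.range (Q.natDegree + 1), Q.coeff i * (x : ℂ) ^ i‖
      ≤ ∑ i ∈ Finset.range (Q.natDegree + 1), ‖Q.coeff i * (x : ℂ) ^ i‖ := norm_sum_le _ _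
    _ ≤ ∑ i ∈ Finset.range (Q.natDegree + 1), ‖Q.coeff i‖ * (1 + |x|) ^ Q.natDegree := by
        refine Finset.sum_le_sum fun i hi => ?_
        rw [norm_mul, norm_pow, Complex.norm_real, Real.norm_eq_abs]
        refine mul_le_mul_of_nonneg_left ?_ (norm_nonneg _)
        calc |x| ^ i ≤ (1 + |x|) ^ i := by
              exact pow_le_pow_left₀ (abs_nonneg x) (by linarith) i
          _ ≤ (1 + |x|) ^ Q.natDegree := by
              exact pow_le_pow_right₀ hx1 (by
                have := Finset.mem_range.mp hi; omega)
    _ = (∑ i ∈ Finset.range (Q.natDegree + 1), ‖Q.coeff i‖) * (1 + |x|) ^ Q.natDegree := by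
        rw [← Finset.sum_mul]
    _ ≤ _ := by
        have : (0:ℝ) ≤ (1 + |x|) ^ Q.natDegree := by positivity
        nlinarith

lemma growth {k : ℕ} (hk : 1 ≤ k) {c : ℝ} (hc : 0 < c) (N : ℕ) :
    ∃ C : ℝ, 0 < C ∧ ∀ x : ℝ, (1 + |x|) ^ N ≤ C * Real.exp ((x / c) ^ (2 * k)) := by
  refine ⟨(1 + c) ^ N * 2 ^ N * 2 ^ N * (1 + (N.factorial : ℝ)), by positivity, fun x => ?_⟩
  set s : ℝ := |x| / c with hs
  have hs0 : 0 ≤ s := by positivity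
  set y : ℝ := s ^ (2 * k) with hy
  have hy0 : 0 ≤ y := by positivity
  have hxy : (x / c) ^ (2 * k) = y := by
    rw [hy, hs, div_pow, div_pow]
    congr 1
    rw [← abs_of_nonneg (a := x ^ (2 * k)) (Even.pow_nonneg (by exact even_two_mul k) x),
      ← pow_abs]
  have h1 : 1 + |x| ≤ (1 + c) * (1 + s) := by
    have : c * s = |x| := by rw [hs, mul_div_cancel₀ _ hc.ne']
    nlinarith [abs_nonneg x]
  have h2 : 1 + s ≤ 2 * (1 + y) := by
    rcases le_total s 1 with h | h
    · nlinarith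
    · have : s ≤ y := by
        rw [hy]
        exact le_self_pow₀ h (by omega)
      nlinarith
  have h3 : (1 + y) ^ N ≤ 2 ^ N * (1 + (N.factorial : ℝ)) * Real.exp y := by
    have hyN : y ^ N ≤ (N.factorial : ℝ) * Real.exp y := by
      have := Real.pow_div_factorial_le_exp y hy0 N
      have hf : (0:ℝ) < N.factorial := by positivity
      rw [div_le_iff₀ hf] at this
      linarith [this]
    have hey : 1 ≤ Real.exp y := Real.one_le_exp hy0
    have hcase : (1 + y) ^ N ≤ 2 ^ N * (1 + y ^ N) := by
      rcases le_total y 1 with h | h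
      · have : (1 + y) ^ N ≤ 2 ^ N := by
          refine pow_le_pow_left₀ (by linarith) (by linarith) N
        nlinarith [pow_nonneg hy0 N, pow_pos (zero_lt_two (α := ℝ)) N]
      · have : (1 + y) ^ N ≤ (2 * y) ^ N := by
          refine pow_le_pow_left₀ (by linarith) (by linarith) N
        rw [mul_pow] at this
        nlinarith [pow_pos (zero_lt_two (α := ℝ)) N]
    calc (1 + y) ^ N ≤ 2 ^ N * (1 + y ^ N) := hcase
      _ ≤ 2 ^ N * (1 + (N.factorial : ℝ) * Real.exp y) := by
          nlinarith [pow_pos (zero_lt_two (α := ℝ)) N]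
      _ ≤ 2 ^ N * ((1 + (N.factorial : ℝ)) * Real.exp y) := by
          have hf : (0:ℝ) ≤ N.factorial := by positivity
          nlinarith [pow_pos (zero_lt_two (α := ℝ)) N]
      _ = 2 ^ N * (1 + (N.factorial : ℝ)) * Real.exp y := by ring
  have c1 : (1 + |x|) ^ N ≤ ((1 + c) * (1 + s)) ^ N :=
    pow_le_pow_left₀ (by positivity) h1 N
  have c2 : ((1 + c) * (1 + s)) ^ N ≤ ((1 + c) * (2 * (1 + y))) ^ N := by
    refine pow_le_pow_left₀ (by positivity) ?_ N
    nlinarith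
  rw [hxy]
  calc (1 + |x|) ^ N ≤ ((1 + c) * (2 * (1 + y))) ^ N := le_trans c1 c2
    _ = (1 + c) ^ N * 2 ^ N * (1 + y) ^ N := by rw [mul_pow, mul_pow]; ring
    _ ≤ (1 + c) ^ N * 2 ^ N * (2 ^ N * (1 + (N.factorial : ℝ)) * Real.exp y) := by
        have : (0:ℝ) < (1 + c) ^ N * 2 ^ N := by positivity
        exact mul_le_mul_of_nonneg_left h3 this.le
    _ = (1 + c) ^ N * 2 ^ N * 2 ^ N * (1 + (N.factorial : ℝ)) * Real.exp y := by ring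

lemma Efun_contDiff (k : ℕ) (c : ℝ) {n : ℕ∞} : ContDiff ℝ n (Efun k c) := by
  have h : ContDiff ℂ n (fun z : ℂ => Complex.exp (-((z / (c : ℂ)) ^ (2 * k)))) :=
    Complex.contDiff_exp.comp (((contDiff_id.div_const _).pow _).neg)
  exact (h.restrict_scalars ℝ).comp Complex.ofRealCLM.contDiff

lemma ofReal_contDiff {n : ℕ∞} : ContDiff ℝ n (fun u : ℝ => (u : ℂ)) :=
  Complex.ofRealCLM.contDiff

lemma pow_E_contDiff (k : ℕ) (c : ℝ) (m : ℕ) {n : ℕ∞} :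
    ContDiff ℝ n (fun u : ℝ => (u : ℂ) ^ m * Efun k c u) :=
  (ofReal_contDiff.pow m).mul (Efun_contDiff k c)

lemma itd_add {n : ℕ} {f g : ℝ → ℂ} (hf : ContDiff ℝ n f) (hg : ContDiff ℝ n g) (x : ℝ) :
    iteratedDeriv n (fun u => f u + g u) x = iteratedDeriv n f x + iteratedDeriv n g x := by
  rw [← iteratedDerivWithin_univ, ← iteratedDerivWithin_univ, ← iteratedDerivWithin_univ]
  exact iteratedDerivWithin_add (Set.mem_univ x) uniqueDiffOn_univ hf.contDiffWithinAt hg.contDiffWithinAt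

lemma itd_smul {n : ℕ} (b : ℂ) {f : ℝ → ℂ} (hf : ContDiff ℝ n f) (x : ℝ) :
    iteratedDeriv n (fun u => b • f u) x = b • iteratedDeriv n f x := by
  rw [← iteratedDerivWithin_univ, ← iteratedDerivWithin_univ]
  exact iteratedDerivWithin_const_smul (Set.mem_univ x) uniqueDiffOn_univ b hf.contDiffWithinAt

set_option maxHeartbeats 1000000 in
lemma piece_bound (ν : ℕ) {A : ℝ} (hA : 0 ≤ A) {c : ℝ} (hc : 1 < c) {k : ℕ} (hk : 1 ≤ k)
    (P : Polynomial ℂ) :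
    ∃ C : ℝ, 0 < C ∧ ∀ u : ℝ,
      ‖iteratedDeriv ν (fun u : ℝ => P.eval (u : ℂ) * Efun k c u) u‖
        ≤ C * (1 + |u|) ^ (-A) := by
  have hc0 : (0:ℝ) < c := lt_trans one_pos hc
  set Q := (dOp k c)^[ν] P with hQ
  obtain ⟨B, hB, hQb⟩ := poly_eval_bound Q
  set m : ℕ := ⌈A⌉₊ with hm
  obtain ⟨C1, hC1, hgrow⟩ := growth hk hc0 (Q.natDegree + m)
  refine ⟨B * C1, by positivity, fun u => ?_⟩
  rw [iter_rep hk hc0 ν P]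
  have hp1 : (1:ℝ) ≤ 1 + |u| := by simp [abs_nonneg]
  have hp0 : (0:ℝ) < 1 + |u| := by linarith
  have hE : ‖Efun k c u‖ = Real.exp (-((u / c) ^ (2 * k))) := by
    have he : Efun k c u = ((Real.exp (-((u / c) ^ (2 * k))) : ℝ) : ℂ) := by
      simp only [Efun]
      rw [Complex.ofReal_exp]
      congr 1
      push_cast
      ring
    rw [he, Complex.norm_real, Real.norm_eq_abs, abs_of_pos (Real.exp_pos _)]
  rw [norm_mul, hE]
  set y : ℝ := (u / c) ^ (2 * k) with hy
  have hey : (0:ℝ) < Real.exp y := Real.exp_pos _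
  have hpA : (0:ℝ) < (1 + |u|) ^ A := Real.rpow_pos_of_pos hp0 _
  have hAm : (1 + |u|) ^ A ≤ (1 + |u|) ^ m := by
    calc (1 + |u|) ^ A ≤ (1 + |u|) ^ (m : ℝ) :=
          Real.rpow_le_rpow_of_exponent_le hp1 (Nat.le_ceil A)
      _ = (1 + |u|) ^ m := Real.rpow_natCast _ _
  have hmain : ‖Q.eval (u : ℂ)‖ * (1 + |u|) ^ A ≤ B * C1 * Real.exp y := by
    calc ‖Q.eval (u : ℂ)‖ * (1 + |u|) ^ A
        ≤ (B * (1 + |u|) ^ Q.natDegree) * (1 + |u|) ^ m := by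
          exact mul_le_mul (hQb u) hAm hpA.le (by positivity)
      _ = B * (1 + |u|) ^ (Q.natDegree + m) := by rw [pow_add]; ring
      _ ≤ B * (C1 * Real.exp y) := by
          exact mul_le_mul_of_nonneg_left (hgrow u) hB.le
      _ = B * C1 * Real.exp y := by ring
  rw [Real.exp_neg, Real.rpow_neg hp0.le, ← div_eq_mul_inv, ← div_eq_mul_inv,
    div_le_div_iff₀ hey hpA]
  exact hmain

lemma key_bound (ν : ℕ) {A : ℝ} (hA : 0 ≤ A) {c : ℝ} (hc : 1 < c) {k : ℕ} (hk : 1 ≤ k) :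
    ∃ C : ℝ, 0 < C ∧ ∀ a b : ℝ, |a| ≤ 1 → |b| ≤ 2 → ∀ u : ℝ,
      ‖iteratedDeriv ν
          (fun u : ℝ => ((1 : ℂ) + (b : ℂ) * (u : ℂ) + (a : ℂ) * (u : ℂ) ^ 2) * Efun k c u) u‖
        ≤ C * (1 + |u|) ^ (-A) := by
  obtain ⟨C0, hC0, H0⟩ := piece_bound ν hA hc hk 1
  obtain ⟨C1, hC1, H1⟩ := piece_bound ν hA hc hk Polynomial.X
  obtain ⟨C2, hC2, H2⟩ := piece_bound ν hA hc hk (Polynomial.X ^ 2)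
  set F0 : ℝ → ℂ := fun u : ℝ => Efun k c u with hF0def
  set F1 : ℝ → ℂ := fun u : ℝ => (u : ℂ) * Efun k c u with hF1def
  set F2 : ℝ → ℂ := fun u : ℝ => (u : ℂ) ^ 2 * Efun k c u with hF2def
  have h0 : ∀ u : ℝ, ‖iteratedDeriv ν F0 u‖ ≤ C0 * (1 + |u|) ^ (-A) := by
    intro u
    have := H0 u
    simpa only [Polynomial.eval_one, one_mul, hF0def] using this
  have h1 : ∀ u : ℝ, ‖iteratedDeriv ν F1 u‖ ≤ C1 * (1 + |u|) ^ (-A) := by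
    intro u
    have := H1 u
    simpa only [Polynomial.eval_X, hF1def] using this
  have h2 : ∀ u : ℝ, ‖iteratedDeriv ν F2 u‖ ≤ C2 * (1 + |u|) ^ (-A) := by
    intro u
    have := H2 u
    simpa only [Polynomial.eval_pow, Polynomial.eval_X, hF2def] using this
  have hF0 : ContDiff ℝ ν F0 := Efun_contDiff k c
  have hF1 : ContDiff ℝ ν F1 := ofReal_contDiff.mul (Efun_contDiff k c)
  have hF2 : ContDiff ℝ ν F2 := (ofReal_contDiff.pow 2).mul (Efun_contDiff k c)
  refine ⟨C0 + 2 * C1 + C2, by positivity, fun a b ha hb u => ?_⟩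
  have hrep : (fun u : ℝ => ((1 : ℂ) + (b : ℂ) * (u : ℂ) + (a : ℂ) * (u : ℂ) ^ 2) * Efun k c u)
      = fun u : ℝ => F0 u + ((b : ℂ) • F1 u + (a : ℂ) • F2 u) := by
    funext u
    simp only [hF0def, hF1def, hF2def, smul_eq_mul]
    ring
  rw [hrep]
  have hsum : iteratedDeriv ν (fun u : ℝ => F0 u + ((b : ℂ) • F1 u + (a : ℂ) • F2 u)) u
      = iteratedDeriv ν F0 u
        + ((b : ℂ) • iteratedDeriv ν F1 u + (a : ℂ) • iteratedDeriv ν F2 u) := by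
    rw [itd_add hF0 ((hF1.const_smul ((b:ℂ))).add (hF2.const_smul ((a:ℂ))))]
    congr 1
    rw [itd_add (hF1.const_smul ((b:ℂ))) (hF2.const_smul ((a:ℂ))),
      itd_smul _ hF1, itd_smul _ hF2]
  rw [hsum]
  have hp : (0:ℝ) ≤ (1 + |u|) ^ (-A) := Real.rpow_nonneg (by positivity) _
  calc ‖iteratedDeriv ν F0 u + ((b:ℂ) • iteratedDeriv ν F1 u + (a:ℂ) • iteratedDeriv ν F2 u)‖
      ≤ ‖iteratedDeriv ν F0 u‖ + (‖(b:ℂ) • iteratedDeriv ν F1 u‖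
          + ‖(a:ℂ) • iteratedDeriv ν F2 u‖) :=
        le_trans (norm_add_le _ _) (by gcongr; exact norm_add_le _ _)
    _ = ‖iteratedDeriv ν F0 u‖ + (|b| * ‖iteratedDeriv ν F1 u‖
          + |a| * ‖iteratedDeriv ν F2 u‖) := by
        rw [norm_smul, norm_smul, Complex.norm_real, Complex.norm_real,
          Real.norm_eq_abs, Real.norm_eq_abs]
    _ ≤ C0 * (1 + |u|) ^ (-A) + (2 * (C1 * (1 + |u|) ^ (-A)) + 1 * (C2 * (1 + |u|) ^ (-A))) := by
        have b1 := h1 u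
        have b2 := h2 u
        have babs : (0:ℝ) ≤ |b| := abs_nonneg _
        have aabs : (0:ℝ) ≤ |a| := abs_nonneg _
        have n1 : (0:ℝ) ≤ ‖iteratedDeriv ν F1 u‖ := norm_nonneg _
        have n2 : (0:ℝ) ≤ ‖iteratedDeriv ν F2 u‖ := norm_nonneg _
        have t1 : |b| * ‖iteratedDeriv ν F1 u‖ ≤ 2 * (C1 * (1 + |u|) ^ (-A)) := by nlinarith
        have t2 : |a| * ‖iteratedDeriv ν F2 u‖ ≤ 1 * (C2 * (1 + |u|) ^ (-A)) := by nlinarith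
        have t0 := h0 u
        linarith
    _ = (C0 + 2 * C1 + C2) * (1 + |u|) ^ (-A) := by ring

lemma g_contDiff (k : ℕ) (c : ℝ) {n : ℕ∞} (a b : ℝ) :
    ContDiff ℝ n (fun u : ℝ => ((1 : ℂ) + (b : ℂ) * (u : ℂ) + (a : ℂ) * (u : ℂ) ^ 2)
      * Efun k c u) :=
  ((contDiff_const.add (contDiff_const.mul ofReal_contDiff)).add
    (contDiff_const.mul (ofReal_contDiff.pow 2))).mul (Efun_contDiff k c)

lemma scale_shift {g : ℝ → ℂ} {n : ℕ} (hg : ContDiff ℝ n g) {M : ℝ} (hM : M ≠ 0) (T₀ t : ℝ) :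
    iteratedDeriv n (fun s : ℝ => g ((s - T₀) / M)) t
      = (M⁻¹) ^ n • iteratedDeriv n g ((t - T₀) / M) := by
  have e1 : (fun s : ℝ => g ((s - T₀) / M)) = fun s : ℝ => g (M⁻¹ * (s + (-T₀))) := by
    funext s
    congr 1
    field_simp
    ring
  have e2 := congrFun (iteratedDeriv_comp_add_const n (fun x : ℝ => g (M⁻¹ * x)) (-T₀)) t
  have e3 := congrFun (iteratedDeriv_comp_const_smul (f := g) hg M⁻¹) (t + -T₀)
  have e4 : M⁻¹ * (t + -T₀) = (t - T₀) / M := by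
    rw [div_eq_inv_mul, sub_eq_add_neg]
  rw [e1, e2, e3, e4]

/-- For every `ν ∈ ℕ`, `A ≥ 0`, `c > 1`, integer `k ≥ 2`, there is
`C = C(ν, A, k, c) > 0` such that for all `T ≥ 2`, `1 ≤ M ≤ T`, `t ∈ ℝ`:
`|(h^♯)^{(ν)}(t)| ≤ C · M^{−ν} · ((1+|t−T|/M)^{−A} + (1+|t+T|/M)^{−A})`. -/
theorem stmt_13 :
    ∀ (ν : ℕ) (A : ℝ), 0 ≤ A → ∀ c : ℝ, 1 < c → ∀ k : ℕ, 2 ≤ k →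
      ∃ C : ℝ, 0 < C ∧
        ∀ T M t : ℝ, 2 ≤ T → 1 ≤ M → M ≤ T →
          ‖iteratedDeriv ν (fun s : ℝ => hSharp T M c k (s : ℂ)) t‖ ≤
            C * M ^ (-(ν : ℝ)) *
              ((1 + |t - T| / M) ^ (-A) + (1 + |t + T| / M) ^ (-A)) := by
  intro ν A hA c hc k hk
  have hk1 : 1 ≤ k := by omega
  obtain ⟨C, hC, hkey⟩ := key_bound ν hA hc hk1
  refine ⟨C, hC, fun T M t hT hM hMT => ?_⟩
  have hM0 : (0:ℝ) < M := by linarith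
  have hT0 : (0:ℝ) < T := by linarith
  have hMne : M ≠ 0 := hM0.ne'
  have hMcne : (M : ℂ) ≠ 0 := by exact_mod_cast hMne
  have hden : (0:ℝ) < T ^ 2 + 1 / 4 := by positivity
  have hdenC : ((T:ℂ) ^ 2 + 1 / 4) ≠ 0 := by
    have h1 : ((T:ℂ) ^ 2 + 1 / 4) = ((T ^ 2 + 1 / 4 : ℝ) : ℂ) := by push_cast; ring
    rw [h1]
    exact_mod_cast hden.ne'
  set a : ℝ := M ^ 2 / (T ^ 2 + 1 / 4) with hadef
  set b : ℝ := 2 * T * M / (T ^ 2 + 1 / 4) with hbdef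
  have ha : |a| ≤ 1 := by
    rw [hadef, abs_of_nonneg (by positivity), div_le_one hden]
    nlinarith
  have hb : |b| ≤ 2 := by
    rw [hbdef, abs_of_nonneg (by positivity), div_le_iff₀ hden]
    nlinarith
  have hb' : |(-b)| ≤ 2 := by rwa [abs_neg]
  have h41 : ((T:ℂ) ^ 2 * 4 + 1) ≠ 0 := by
    intro h
    exact hdenC (by linear_combination h / 4)
  have h4 : ((T:ℂ) ^ 2 * (M:ℂ) * 4 + (M:ℂ)) ≠ 0 := by
    have e : (T:ℂ) ^ 2 * (M:ℂ) * 4 + (M:ℂ) = (M:ℂ) * ((T:ℂ) ^ 2 * 4 + 1) := by ring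
    rw [e]
    exact mul_ne_zero hMcne h41
  have h5 : ((T:ℂ) ^ 2 * (M:ℂ) ^ 2 * 4 + (M:ℂ) ^ 2) ≠ 0 := by
    have e : (T:ℂ) ^ 2 * (M:ℂ) ^ 2 * 4 + (M:ℂ) ^ 2 = (M:ℂ) ^ 2 * ((T:ℂ) ^ 2 * 4 + 1) := by
      ring
    rw [e]
    exact mul_ne_zero (pow_ne_zero _ hMcne) h41
  have h6 : ((T:ℂ) ^ 2 * (M:ℂ) ^ 3 * 32 + (T:ℂ) ^ 4 * (M:ℂ) ^ 3 * 64 + (M:ℂ) ^ 3 * 4) ≠ 0 := by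
    have e : (T:ℂ) ^ 2 * (M:ℂ) ^ 3 * 32 + (T:ℂ) ^ 4 * (M:ℂ) ^ 3 * 64 + (M:ℂ) ^ 3 * 4
        = (M:ℂ) ^ 3 * 4 * ((T:ℂ) ^ 2 * 4 + 1) ^ 2 := by ring
    rw [e]
    exact mul_ne_zero (mul_ne_zero (pow_ne_zero _ hMcne) (by norm_num)) (pow_ne_zero _ h41)
  have hfun : (fun s : ℝ => hSharp T M c k (s : ℂ))
      = fun s : ℝ =>
          (fun u : ℝ => ((1 : ℂ) + (b : ℂ) * (u : ℂ) + (a : ℂ) * (u : ℂ) ^ 2) * Efun k c u)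
            ((s - T) / M)
        + (fun u : ℝ => ((1 : ℂ) + ((-b : ℝ) : ℂ) * (u : ℂ) + (a : ℂ) * (u : ℂ) ^ 2)
            * Efun k c u) ((s - (-T)) / M) := by
    funext s
    have hu1 : (((s - T) / M : ℝ) : ℂ) = ((s : ℂ) - T) / M := by push_cast; ring
    have hu2 : (((s - -T) / M : ℝ) : ℂ) = ((s : ℂ) + T) / M := by push_cast; ring
    have haC : (a : ℂ) * ((T : ℂ) ^ 2 + 1 / 4) = (M : ℂ) ^ 2 := by
      rw [hadef]
      push_cast
      field_simp
    have hbC : (b : ℂ) * ((T : ℂ) ^ 2 + 1 / 4) = 2 * (T : ℂ) * (M : ℂ) := by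
      rw [hbdef]
      push_cast
      field_simp
    have hMu1 : (M : ℂ) * (((s : ℂ) - T) / M) = (s : ℂ) - T := by
      field_simp
    have hMu2 : (M : ℂ) * (((s : ℂ) + T) / M) = (s : ℂ) + T := by
      field_simp
    have hq1 : (1 : ℂ) + (b : ℂ) * (((s : ℂ) - T) / M) + (a : ℂ) * (((s : ℂ) - T) / M) ^ 2
        = ((s : ℂ) ^ 2 + 1 / 4) / ((T : ℂ) ^ 2 + 1 / 4) := by
      rw [eq_div_iff hdenC]
      linear_combination (((s : ℂ) - T) / M) * hbC + (((s : ℂ) - T) / M) ^ 2 * haC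
        + (2 * (T : ℂ) + (M : ℂ) * (((s : ℂ) - T) / M) + ((s : ℂ) - T)) * hMu1
    have hq2 : (1 : ℂ) + ((-b : ℝ) : ℂ) * (((s : ℂ) + T) / M)
          + (a : ℂ) * (((s : ℂ) + T) / M) ^ 2
        = ((s : ℂ) ^ 2 + 1 / 4) / ((T : ℂ) ^ 2 + 1 / 4) := by
      push_cast
      rw [eq_div_iff hdenC]
      linear_combination (-(((s : ℂ) + T) / M)) * hbC + (((s : ℂ) + T) / M) ^ 2 * haC
        + (-(2 * (T : ℂ)) + (M : ℂ) * (((s : ℂ) + T) / M) + ((s : ℂ) + T)) * hMu2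
    simp only [hSharp, Phi, Efun, hu1, hu2]
    rw [hq1, hq2]
    ring
  rw [hfun]
  have hg1 : ContDiff ℝ ν (fun u : ℝ => ((1 : ℂ) + (b : ℂ) * (u : ℂ) + (a : ℂ) * (u : ℂ) ^ 2)
      * Efun k c u) := g_contDiff k c a b
  have hg2 : ContDiff ℝ ν (fun u : ℝ => ((1 : ℂ) + ((-b : ℝ) : ℂ) * (u : ℂ)
      + (a : ℂ) * (u : ℂ) ^ 2) * Efun k c u) := g_contDiff k c a (-b)
  have haff1 : ContDiff ℝ ν (fun s : ℝ =>
      (fun u : ℝ => ((1 : ℂ) + (b : ℂ) * (u : ℂ) + (a : ℂ) * (u : ℂ) ^ 2) * Efun k c u)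
        ((s - T) / M)) :=
    hg1.comp ((contDiff_id.sub contDiff_const).div_const M)
  have haff2 : ContDiff ℝ ν (fun s : ℝ =>
      (fun u : ℝ => ((1 : ℂ) + ((-b : ℝ) : ℂ) * (u : ℂ) + (a : ℂ) * (u : ℂ) ^ 2) * Efun k c u)
        ((s - (-T)) / M)) :=
    hg2.comp ((contDiff_id.sub contDiff_const).div_const M)
  rw [itd_add haff1 haff2 t]
  rw [scale_shift hg1 hMne T t, scale_shift hg2 hMne (-T) t]
  have hMpow : M ^ (-(ν : ℝ)) = (M⁻¹) ^ ν := by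
    rw [Real.rpow_neg hM0.le, Real.rpow_natCast, inv_pow]
  have habs1 : |(t - T) / M| = |t - T| / M := by
    rw [abs_div, abs_of_pos hM0]
  have habs2 : |(t - -T) / M| = |t + T| / M := by
    rw [abs_div, abs_of_pos hM0, sub_neg_eq_add]
  have hpos : (0:ℝ) ≤ (M⁻¹) ^ ν := by positivity
  have k1 := hkey a b ha hb ((t - T) / M)
  have k2 := hkey a (-b) ha hb' ((t - -T) / M)
  rw [habs1] at k1
  rw [habs2] at k2
  calc ‖(M⁻¹) ^ ν • iteratedDeriv ν
          (fun u : ℝ => ((1 : ℂ) + (b : ℂ) * (u : ℂ) + (a : ℂ) * (u : ℂ) ^ 2) * Efun k c u)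
          ((t - T) / M)
        + (M⁻¹) ^ ν • iteratedDeriv ν
          (fun u : ℝ => ((1 : ℂ) + ((-b : ℝ) : ℂ) * (u : ℂ) + (a : ℂ) * (u : ℂ) ^ 2)
            * Efun k c u) ((t - -T) / M)‖
      ≤ (M⁻¹) ^ ν * ‖iteratedDeriv ν
          (fun u : ℝ => ((1 : ℂ) + (b : ℂ) * (u : ℂ) + (a : ℂ) * (u : ℂ) ^ 2) * Efun k c u)
          ((t - T) / M)‖
        + (M⁻¹) ^ ν * ‖iteratedDeriv ν
          (fun u : ℝ => ((1 : ℂ) + ((-b : ℝ) : ℂ) * (u : ℂ) + (a : ℂ) * (u : ℂ) ^ 2)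
            * Efun k c u) ((t - -T) / M)‖ := by
        refine le_trans (norm_add_le _ _) ?_
        rw [norm_smul, norm_smul, Real.norm_eq_abs, abs_of_nonneg hpos]
    _ ≤ (M⁻¹) ^ ν * (C * (1 + |t - T| / M) ^ (-A))
        + (M⁻¹) ^ ν * (C * (1 + |t + T| / M) ^ (-A)) := by
        gcongr
    _ = C * M ^ (-(ν : ℝ)) * ((1 + |t - T| / M) ^ (-A) + (1 + |t + T| / M) ^ (-A)) := by
        rw [hMpow]; ring
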